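/- Let K ≥ 1 and j ≥ 0 be integers, let a be real, b > 0 real, and let m be an integer with m > a + 2bK. Then the improper integrals I_{C₃}(K,j;a−m,b) and I_{C₄}(K,j;a−m,b) converge absolutely and I_{C₀}(K,j;a−m,b) = I_{C₃}(K,j;a−m,b) − I_{C₄}(K,j;a−m,b). -/

import Mathlib

open MeasureTheory

/-- `I_{C₀}(K,j;c,b) = K^{-j} ∫_0^K t^j exp(2πi c t + 2πi b t²) dt`. -/
noncomputable def IC0 (K j : ℕ) (c b : ℝ) : ℂ :=
  ((K : ℂ) ^ j)⁻¹ * ∫ t in (0 : ℝ)..(K : ℝ), (t : ℂ) ^ j *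
    Complex.exp (2 * (Real.pi : ℂ) * Complex.I * (c : ℂ) * (t : ℂ) +
      2 * (Real.pi : ℂ) * Complex.I * (b : ℂ) * (t : ℂ) ^ 2)

/-- The integrand of `I_{C₃}`, i.e. of the contour integral of
`z^j exp(2πi c z + 2πi b z²)` along the downward ray `{−it : t ≥ 0}`. -/
noncomputable def fC3 (K j : ℕ) (c b : ℝ) (t : ℝ) : ℂ :=
  (t : ℂ) ^ j * Complex.exp (2 * (Real.pi : ℂ) * (c : ℂ) * (t : ℂ) -
    2 * (Real.pi : ℂ) * Complex.I * (b : ℂ) * (t : ℂ) ^ 2)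

/-- `I_{C₃}(K,j;c,b) = (−i)^{j+1} K^{-j} ∫_0^∞ t^j exp(2πct − 2πib t²) dt`. -/
noncomputable def IC3 (K j : ℕ) (c b : ℝ) : ℂ :=
  (-Complex.I) ^ (j + 1) * ((K : ℂ) ^ j)⁻¹ * ∫ t in Set.Ioi (0 : ℝ), fC3 K j c b t

/-- The integrand of `I_{C₄}`, i.e. of the contour integral of
`z^j exp(2πi c z + 2πi b z²)` along the downward ray `{K−it : t ≥ 0}`. -/
noncomputable def fC4 (K j : ℕ) (c b : ℝ) (t : ℝ) : ℂ :=
  ((K : ℂ) - Complex.I * (t : ℂ)) ^ j *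
    Complex.exp (2 * (Real.pi : ℂ) * Complex.I * (c : ℂ) *
        ((K : ℂ) - Complex.I * (t : ℂ)) +
      2 * (Real.pi : ℂ) * Complex.I * (b : ℂ) *
        ((K : ℂ) - Complex.I * (t : ℂ)) ^ 2)

/-- `I_{C₄}(K,j;c,b) = −i K^{-j} ∫_0^∞ (K−it)^j exp(2πic(K−it) + 2πib(K−it)²) dt`. -/
noncomputable def IC4 (K j : ℕ) (c b : ℝ) : ℂ :=
  -Complex.I * ((K : ℂ) ^ j)⁻¹ * ∫ t in Set.Ioi (0 : ℝ), fC4 K j c b t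

open Set Filter Topology

/-- The entire function whose contour integrals we compare. -/
noncomputable def fz (j : ℕ) (c b : ℝ) (z : ℂ) : ℂ :=
  z ^ j * Complex.exp (2 * (Real.pi : ℂ) * Complex.I * (c : ℂ) * z +
    2 * (Real.pi : ℂ) * Complex.I * (b : ℂ) * z ^ 2)

lemma fz_diff (j : ℕ) (c b : ℝ) : Differentiable ℂ (fz j c b) := by
  unfold fz; fun_prop

lemma aux_pow_le (j : ℕ) {x : ℝ} (hx : 0 ≤ x) : x ^ j ≤ j.factorial * Real.exp x := by
  have h := Real.sum_le_exp_of_nonneg hx (j + 1)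
  have h2 : x ^ j / j.factorial ≤ Real.exp x :=
    le_trans (Finset.single_le_sum (f := fun i => x ^ i / i.factorial)
      (fun i _ => by positivity) (Finset.self_mem_range_succ j)) h
  have hj : (0 : ℝ) < j.factorial := by positivity
  calc x ^ j = x ^ j / j.factorial * j.factorial := by field_simp
    _ ≤ Real.exp x * j.factorial := mul_le_mul_of_nonneg_right h2 hj.le
    _ = _ := mul_comm _ _

lemma aux_key (j : ℕ) {A r t : ℝ} (hA : 0 ≤ A) (hr : 0 < r) (ht : 0 ≤ t) :
    (A + t) ^ j * Real.exp (-(r * t)) ≤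
      (j.factorial * (2 / r) ^ j * Real.exp (r / 2 * A)) * Real.exp (-(r / 2) * t) := by
  have h1 : (r / 2 * (A + t)) ^ j ≤ j.factorial * Real.exp (r / 2 * (A + t)) :=
    aux_pow_le j (by positivity)
  have h2 : (A + t) ^ j = (r / 2 * (A + t)) ^ j * (2 / r) ^ j := by
    rw [← mul_pow]; congr 1; field_simp
  have key : (A + t) ^ j ≤ j.factorial * (2 / r) ^ j * Real.exp (r / 2 * (A + t)) := by
    rw [h2]
    calc (r / 2 * (A + t)) ^ j * (2 / r) ^ j
        ≤ (j.factorial * Real.exp (r / 2 * (A + t))) * (2 / r) ^ j :=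
          mul_le_mul_of_nonneg_right h1 (by positivity)
      _ = _ := by ring
  calc (A + t) ^ j * Real.exp (-(r * t))
      ≤ (j.factorial * (2 / r) ^ j * Real.exp (r / 2 * (A + t))) * Real.exp (-(r * t)) :=
        mul_le_mul_of_nonneg_right key (Real.exp_nonneg _)
    _ = _ := by
        rw [mul_assoc, mul_assoc, ← Real.exp_add, mul_assoc, ← Real.exp_add]
        rw [show r / 2 * (A + t) + -(r * t) = r / 2 * A + -(r / 2) * t by ring]; ring

lemma aux_integrable (j : ℕ) {A r : ℝ} (hA : 0 ≤ A) (hr : 0 < r) {f : ℝ → ℂ}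
    (hf : Continuous f)
    (hbound : ∀ t ∈ Set.Ioi (0 : ℝ), ‖f t‖ ≤ (A + t) ^ j * Real.exp (-(r * t))) :
    IntegrableOn f (Set.Ioi 0) := by
  have hs : 0 < r / 2 := by positivity
  refine Integrable.mono'
    (g := fun t => (j.factorial * (2 / r) ^ j * Real.exp (r / 2 * A)) * Real.exp (-(r / 2) * t))
    ((exp_neg_integrableOn_Ioi 0 hs).const_mul _) hf.aestronglyMeasurable.restrict ?_
  filter_upwards [ae_restrict_mem measurableSet_Ioi] with t ht
  exact le_trans (hbound t ht) (aux_key j hA hr (le_of_lt ht))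

lemma contour (j : ℕ) (c b : ℝ) (Kr : ℝ) (T : ℝ) :
    (∫ x in (0:ℝ)..Kr, fz j c b x) =
      (∫ x in (0:ℝ)..Kr, fz j c b ((x:ℂ) - (T:ℂ) * Complex.I))
      + Complex.I • (∫ t in (0:ℝ)..T, fz j c b ((Kr:ℂ) - (t:ℂ) * Complex.I))
      - Complex.I • (∫ t in (0:ℝ)..T, fz j c b (-((t:ℂ) * Complex.I))) := by
  have h := Complex.integral_boundary_rect_eq_zero_of_differentiableOn (fz j c b)
    ⟨0, -T⟩ ⟨Kr, 0⟩ ((fz_diff j c b).differentiableOn)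
  simp only [Complex.ofReal_zero, zero_mul, add_zero, zero_add, Complex.ofReal_neg, neg_mul,
    ← sub_eq_add_neg] at h
  have hc1 : (∫ y in (-T)..(0:ℝ), fz j c b ((Kr:ℂ) + (y:ℂ) * Complex.I))
      = ∫ t in (0:ℝ)..T, fz j c b ((Kr:ℂ) - (t:ℂ) * Complex.I) := by
    have h2 := intervalIntegral.integral_comp_neg (a := (0:ℝ)) (b := T)
      (fun y : ℝ => fz j c b ((Kr:ℂ) + (y:ℂ) * Complex.I))
    simp only [neg_zero, Complex.ofReal_neg, neg_mul, ← sub_eq_add_neg] at h2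
    rw [← h2]
  have hc2 : (∫ y in (-T)..(0:ℝ), fz j c b ((y:ℂ) * Complex.I))
      = ∫ t in (0:ℝ)..T, fz j c b (-((t:ℂ) * Complex.I)) := by
    have h2 := intervalIntegral.integral_comp_neg (a := (0:ℝ)) (b := T)
      (fun y : ℝ => fz j c b ((y:ℂ) * Complex.I))
    simp only [neg_zero, Complex.ofReal_neg, neg_mul] at h2
    rw [← h2]
  rw [hc1, hc2] at h
  simp only [smul_eq_mul] at h ⊢
  linear_combination -h

lemma fz_eq_fC4 (K j : ℕ) (c b : ℝ) (t : ℝ) :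
    fz j c b ((K:ℂ) - (t:ℂ) * Complex.I) = fC4 K j c b t := by
  unfold fz fC4
  rw [mul_comm Complex.I ((t:ℝ):ℂ)]

lemma fz_eq_fC3 (K j : ℕ) (c b : ℝ) (t : ℝ) :
    fz j c b (-((t:ℂ) * Complex.I)) = (-Complex.I) ^ j * fC3 K j c b t := by
  unfold fz fC3
  have hE : 2 * (Real.pi:ℂ) * Complex.I * (c:ℂ) * (-((t:ℂ) * Complex.I)) +
      2 * (Real.pi:ℂ) * Complex.I * (b:ℂ) * (-((t:ℂ) * Complex.I)) ^ 2 =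
      2 * (Real.pi:ℂ) * (c:ℂ) * (t:ℂ) - 2 * (Real.pi:ℂ) * Complex.I * (b:ℂ) * (t:ℂ) ^ 2 := by
    linear_combination (2 * (Real.pi:ℂ) * (b:ℂ) * (t:ℂ)^2 * Complex.I -
      2 * (Real.pi:ℂ) * (c:ℂ) * (t:ℂ)) * Complex.I_sq
  rw [hE, show (-((t:ℂ) * Complex.I)) ^ j = (-Complex.I) ^ j * (t:ℂ) ^ j by
    rw [← mul_pow]; congr 1; ring]
  ring

lemma re_aux (c b x t : ℝ) :
    (2 * (Real.pi : ℂ) * Complex.I * (c : ℂ) * ((x : ℂ) - (t : ℂ) * Complex.I) +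
      2 * (Real.pi : ℂ) * Complex.I * (b : ℂ) * ((x : ℂ) - (t : ℂ) * Complex.I) ^ 2).re
      = 2 * Real.pi * c * t + 4 * Real.pi * b * x * t := by
  simp [Complex.add_re, Complex.mul_re, Complex.mul_im, Complex.sub_re, Complex.sub_im, pow_two]
  ring

lemma re_aux3 (c b t : ℝ) :
    (2 * (Real.pi : ℂ) * (c : ℂ) * (t : ℂ) -
      2 * (Real.pi : ℂ) * Complex.I * (b : ℂ) * (t : ℂ) ^ 2).re = 2 * Real.pi * c * t := by
  simp [Complex.sub_re, Complex.mul_re, Complex.mul_im, pow_two]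

lemma norm_fz (j : ℕ) (c b x t : ℝ) (hx : 0 ≤ x) (ht : 0 ≤ t) :
    ‖fz j c b ((x:ℂ) - (t:ℂ) * Complex.I)‖
      ≤ (x + t) ^ j * Real.exp (2 * Real.pi * c * t + 4 * Real.pi * b * x * t) := by
  unfold fz
  rw [norm_mul, norm_pow, Complex.norm_exp, re_aux]
  have habs : ‖(x:ℂ) - (t:ℂ) * Complex.I‖ ≤ x + t := by
    refine le_trans (Complex.norm_le_abs_re_add_abs_im _) ?_
    simp [abs_of_nonneg hx, abs_of_nonneg ht]
  gcongr

/-- For `m > a + 2bK` the improper integrals `I_{C₃}` and `I_{C₄}` converge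
absolutely, and `I_{C₀}(K,j;a−m,b) = I_{C₃}(K,j;a−m,b) − I_{C₄}(K,j;a−m,b)`. -/
theorem IC0_eq_IC3_sub_IC4 (K : ℕ) (hK : 1 ≤ K) (j : ℕ) (a b : ℝ) (hb : 0 < b)
    (m : ℤ) (hm : a + 2 * b * K < (m : ℝ)) :
    IntegrableOn (fC3 K j (a - (m : ℝ)) b) (Set.Ioi (0 : ℝ)) ∧
    IntegrableOn (fC4 K j (a - (m : ℝ)) b) (Set.Ioi (0 : ℝ)) ∧
    IC0 K j (a - (m : ℝ)) b = IC3 K j (a - (m : ℝ)) b - IC4 K j (a - (m : ℝ)) b := by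
  set c : ℝ := a - (m : ℝ) with hc
  have hπ := Real.pi_pos
  have hK0 : (0:ℝ) < (K:ℝ) := by exact_mod_cast Nat.lt_of_lt_of_le Nat.zero_lt_one hK
  set r : ℝ := 2 * Real.pi * ((m:ℝ) - a - 2 * b * K) with hrdef
  have hr4 : 0 < r := by
    have h1 : 0 < (m:ℝ) - a - 2 * b * K := by linarith
    rw [hrdef]; positivity
  have hr3 : 0 < 2 * Real.pi * ((m:ℝ) - a) := by
    have hbK : 0 < 2 * b * (K:ℝ) := by positivity
    have h1 : 0 < (m:ℝ) - a := by linarith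
    positivity
  have hi3 : IntegrableOn (fC3 K j c b) (Set.Ioi (0:ℝ)) := by
    refine aux_integrable j (A := 0) le_rfl hr3 ?_ ?_
    · unfold fC3; fun_prop
    · intro t ht
      have ht0 : (0:ℝ) ≤ t := le_of_lt ht
      unfold fC3
      rw [norm_mul, norm_pow, Complex.norm_exp, re_aux3,
        Complex.norm_real, Real.norm_eq_abs, abs_of_nonneg ht0, zero_add]
      refine le_of_eq ?_
      congr 1
      rw [hc]; ring
  have hi4 : IntegrableOn (fC4 K j c b) (Set.Ioi (0:ℝ)) := by
    refine aux_integrable j (A := (K:ℝ)) hK0.le hr4 ?_ ?_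
    · unfold fC4; fun_prop
    · intro t ht
      rw [← fz_eq_fC4]
      refine le_trans (norm_fz j c b K t hK0.le (le_of_lt ht)) ?_
      refine le_of_eq ?_
      congr 1
      rw [hc, hrdef]; ring
  refine ⟨hi3, hi4, ?_⟩
  have hlim4 : Tendsto (fun T => ∫ t in (0:ℝ)..T, fC4 K j c b t) atTop
      (𝓝 (∫ t in Set.Ioi (0:ℝ), fC4 K j c b t)) :=
    intervalIntegral_tendsto_integral_Ioi 0 hi4 tendsto_id
  have hlim3 : Tendsto (fun T => ∫ t in (0:ℝ)..T, fC3 K j c b t) atTop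
      (𝓝 (∫ t in Set.Ioi (0:ℝ), fC3 K j c b t)) :=
    intervalIntegral_tendsto_integral_Ioi 0 hi3 tendsto_id
  have hexp0 : Tendsto (fun T : ℝ => Real.exp (-(r / 2) * T)) atTop (𝓝 0) := by
    have h1 : Tendsto (fun T : ℝ => (r / 2) * T) atTop atTop :=
      Tendsto.const_mul_atTop (by positivity) tendsto_id
    have h2 := Real.tendsto_exp_neg_atTop_nhds_zero.comp h1
    simpa only [Function.comp_def, neg_mul] using h2
  set C : ℝ := j.factorial * (2 / r) ^ j * Real.exp (r / 2 * K) with hC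
  have hlim0 : Tendsto (fun T : ℝ => ∫ x in (0:ℝ)..(K:ℝ), fz j c b ((x:ℂ) - (T:ℂ) * Complex.I))
      atTop (𝓝 0) := by
    rw [tendsto_zero_iff_norm_tendsto_zero]
    have hg : Tendsto (fun T : ℝ => (C * Real.exp (-(r / 2) * T)) * K) atTop (𝓝 0) := by
      have := (hexp0.const_mul C).mul_const (K:ℝ)
      simpa using this
    refine squeeze_zero' (Eventually.of_forall fun T => norm_nonneg _) ?_ hg
    filter_upwards [eventually_ge_atTop (0:ℝ)] with T hT0
    calc ‖∫ x in (0:ℝ)..(K:ℝ), fz j c b ((x:ℂ) - (T:ℂ) * Complex.I)‖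
        ≤ (((K:ℝ) + T) ^ j * Real.exp (-(r * T))) * |(K:ℝ) - 0| := by
          apply intervalIntegral.norm_integral_le_of_norm_le_const
          intro x hx
          rw [Set.uIoc_of_le hK0.le] at hx
          refine le_trans (norm_fz j c b x T hx.1.le hT0) ?_
          have hxK : x ≤ (K:ℝ) := hx.2
          have hmono : 2 * Real.pi * c * T + 4 * Real.pi * b * x * T ≤ -(r * T) := by
            rw [hc, hrdef]
            nlinarith [mul_le_mul_of_nonneg_right
              (mul_le_mul_of_nonneg_left hxK (by positivity : (0:ℝ) ≤ 4 * Real.pi * b)) hT0]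
          gcongr <;> linarith [hx.1.le, hx.2, hT0, hmono]
      _ ≤ (C * Real.exp (-(r / 2) * T)) * K := by
          rw [sub_zero, abs_of_nonneg hK0.le, hC]
          exact mul_le_mul_of_nonneg_right (aux_key j hK0.le hr4 hT0) hK0.le
  have key : ∀ T : ℝ, (∫ x in (0:ℝ)..(K:ℝ), fz j c b x) =
      (∫ x in (0:ℝ)..(K:ℝ), fz j c b ((x:ℂ) - (T:ℂ) * Complex.I))
      + Complex.I * (∫ t in (0:ℝ)..T, fC4 K j c b t)
      - Complex.I * ((-Complex.I) ^ j * ∫ t in (0:ℝ)..T, fC3 K j c b t) := by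
    intro T
    rw [contour j c b K T]
    simp only [smul_eq_mul, Complex.ofReal_natCast, fz_eq_fC4, fz_eq_fC3 (K := K), intervalIntegral.integral_const_mul]
  have hGlim : Tendsto (fun T : ℝ =>
      (∫ x in (0:ℝ)..(K:ℝ), fz j c b ((x:ℂ) - (T:ℂ) * Complex.I))
      + Complex.I * (∫ t in (0:ℝ)..T, fC4 K j c b t)
      - Complex.I * ((-Complex.I) ^ j * ∫ t in (0:ℝ)..T, fC3 K j c b t)) atTop
      (𝓝 ((0:ℂ) + Complex.I * (∫ t in Set.Ioi (0:ℝ), fC4 K j c b t)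
        - Complex.I * ((-Complex.I) ^ j * ∫ t in Set.Ioi (0:ℝ), fC3 K j c b t))) :=
    (hlim0.add (hlim4.const_mul Complex.I)).sub
      ((hlim3.const_mul ((-Complex.I) ^ j)).const_mul Complex.I)
  have h2 : Tendsto (fun _ : ℝ => ∫ x in (0:ℝ)..(K:ℝ), fz j c b x) atTop
      (𝓝 ((0:ℂ) + Complex.I * (∫ t in Set.Ioi (0:ℝ), fC4 K j c b t)
        - Complex.I * ((-Complex.I) ^ j * ∫ t in Set.Ioi (0:ℝ), fC3 K j c b t))) :=
    hGlim.congr fun T => (key T).symm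
  have heq : (∫ x in (0:ℝ)..(K:ℝ), fz j c b x)
      = (0:ℂ) + Complex.I * (∫ t in Set.Ioi (0:ℝ), fC4 K j c b t)
        - Complex.I * ((-Complex.I) ^ j * ∫ t in Set.Ioi (0:ℝ), fC3 K j c b t) :=
    tendsto_nhds_unique tendsto_const_nhds h2
  have hsame : (∫ t in (0:ℝ)..(K:ℝ), (t : ℂ) ^ j *
      Complex.exp (2 * (Real.pi : ℂ) * Complex.I * (c : ℂ) * (t : ℂ) +
        2 * (Real.pi : ℂ) * Complex.I * (b : ℂ) * (t : ℂ) ^ 2))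
      = ∫ x in (0:ℝ)..(K:ℝ), fz j c b x := rfl
  unfold IC0 IC3 IC4
  rw [hsame, heq]
  ring
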